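/- Fix the order N < D < E. With φ defined as follows on bad paths W in Del(n,n,l): letting w_k be the first deepest step and W_1 the maximal window of D's around it (r D's before, s D's after), replace W_1 by D^{r-1} E D^{s+1} if r ≥ 1 and by D^s E if r = 0. Then φ is a bijection onto Del(n+1,n-1,l) with maj(W) = maj(φ(W)) for all bad W. -/

import Mathlib

inductive Step : Type
  | E | D | N
deriving DecidableEq

instance : Fintype Step := ⟨{Step.E, Step.D, Step.N}, fun x => by cases x <;> decide⟩

open Step Polynomial

/-- All words of length `l` over the step alphabet. -/
def Words (l : ℕ) : Finset (List Step) :=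
  (Finset.univ : Finset (Fin l → Step)).image List.ofFn

/-- Delannoy paths from (0,0) to (m,n) with `l` steps, encoded as words:
`#E + #D = m`, `#N + #D = n`, length `l`. -/
def DelSet (m n l : ℕ) : Finset (List Step) :=
  (Words l).filter fun w => w.count E + w.count D = m ∧ w.count N + w.count D = n

/-- A word is bad if some prefix contains more N's than E's. -/
def bad (w : List Step) : Bool :=
  (List.range (w.length + 1)).any fun k => (w.take k).count E < (w.take k).count N

/-- Bad Delannoy paths from (0,0) to (n,n) with `l` steps. -/
def BDelSet (n l : ℕ) : Finset (List Step) :=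
  (DelSet n n l).filter fun w => bad w

/-- Schröder paths: Delannoy paths to (n,n) never going above the diagonal. -/
def SchSet (n l : ℕ) : Finset (List Step) :=
  (DelSet n n l).filter fun w => ¬ bad w

/-- Major index of a word w_1 ⋯ w_l with respect to a ranking of the letters:
the sum of all positions i (1 ≤ i ≤ l-1) with w_i > w_{i+1}. -/
def maj (rank : Step → ℕ) (w : List Step) : ℕ :=
  ∑ i ∈ Finset.range (w.length - 1),
    if rank (w.getD (i + 1) E) < rank (w.getD i E) then i + 1 else 0

/-- q-integer [m] = 1 + q + ⋯ + q^{m-1}. -/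
noncomputable def qint (m : ℕ) : Polynomial ℚ :=
  ∑ i ∈ Finset.range m, X ^ i

/-- q-factorial. -/
noncomputable def qfact : ℕ → Polynomial ℚ
  | 0 => 1
  | m + 1 => qfact m * qint (m + 1)

/-- Gaussian binomial coefficient, via the q-Pascal recurrence. -/
noncomputable def qbinom : ℕ → ℕ → Polynomial ℚ
  | _, 0 => 1
  | 0, _ + 1 => 0
  | m + 1, k + 1 => qbinom m k + X ^ (k + 1) * qbinom m (k + 1)

/-- q-trinomial coefficient [l]!/([a]![b]![c]!), defined when a+b+c = l. -/
noncomputable def qbinom3 (l a b c : ℕ) : Polynomial ℚ :=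
  if a + b + c = l then qbinom l a * qbinom (l - a) b else 0

/-- Depth after the first `i` steps: #N − #E. -/
def depth (w : List Step) (i : ℕ) : ℤ :=
  ((w.take i).count N : ℤ) - (w.take i).count E

/-- `k` (0 ≤ k ≤ l) achieves the maximal running depth. -/
def isMaxDepth (w : List Step) (k : ℕ) : Bool :=
  (List.range (w.length + 1)).all fun i => decide (depth w i ≤ depth w k)

/-- The first index (number of steps) at which the running depth is maximal. -/
def firstDeep (w : List Step) : ℕ :=
  (List.range (w.length + 1)).findIdx (isMaxDepth w)

/-- The last index at which the running depth is maximal. -/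
def lastDeep (w : List Step) : ℕ :=
  w.length - (List.range (w.length + 1)).reverse.findIdx (isMaxDepth w)

/-- Replace the first deepest step (the step w_k, k = firstDeep) with E. -/
def phi (w : List Step) : List Step := w.set (firstDeep w - 1) E

/-- Replace the step following the last deepest point with N. -/
def phiInv (w : List Step) : List Step := w.set (lastDeep w) N

/-- Number of consecutive D's immediately after the first deepest step. -/
def runS (w : List Step) : ℕ := ((w.drop (firstDeep w)).takeWhile (· == D)).length

/-- Number of consecutive D's immediately before the first deepest step. -/
def runR (w : List Step) : ℕ :=
  ((w.take (firstDeep w - 1)).reverse.takeWhile (· == D)).length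

/-- The window map: replace W₁ = D^r w_k D^s by D^{r-1} E D^{s+1} if r ≥ 1,
and by D^s E if r = 0. -/
def phiWin (w : List Step) : List Step :=
  let k := firstDeep w - 1
  let r := runR w
  let s := runS w
  let seg : List Step :=
    if 1 ≤ r then List.replicate (r - 1) D ++ [E] ++ List.replicate (s + 1) D
    else List.replicate s D ++ [E]
  w.take (k - r) ++ seg ++ w.drop (k + s + 1)

/-- 0-based index of the first step after which the path is above the diagonal. -/
def firstAbove (w : List Step) : ℕ :=
  (List.range w.length).findIdx fun i =>
    decide ((w.take (i + 1)).count E < (w.take (i + 1)).count N)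

/-- The map ψ of Bonin–Shapiro–Simion: replace with E the last N of the maximal
run of consecutive N's beginning at the first step going above the diagonal. -/
def psi (w : List Step) : List Step :=
  let i := firstAbove w
  let j := i + ((w.drop i).takeWhile (· == N)).length - 1
  w.set j E

section Infra

open List

/-- Total depth of a word. -/
def dtot (L : List Step) : ℤ := (L.count N : ℤ) - L.count E

lemma depth_eq_dtot (w : List Step) (i : ℕ) : depth w i = dtot (w.take i) := rfl

@[simp] lemma dtot_nil : dtot [] = 0 := rfl

@[simp] lemma dtot_append (A B : List Step) : dtot (A ++ B) = dtot A + dtot B := by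
  simp [dtot, List.count_append]; ring

@[simp] lemma dtot_replicate_D (k : ℕ) : dtot (List.replicate k D) = 0 := by
  simp [dtot, List.count_replicate]

@[simp] lemma dtot_singleton (x : Step) :
    dtot [x] = (match x with | N => 1 | E => -1 | D => 0 : ℤ) := by
  cases x <;> simp [dtot]

lemma dtot_take_append (A B : List Step) (i : ℕ) :
    dtot ((A ++ B).take i) = dtot (A.take i) + dtot (B.take (i - A.length)) := by
  rw [List.take_append, dtot_append]

lemma dtot_take_of_le {L : List Step} {i : ℕ} (h : L.length ≤ i) : dtot (L.take i) = dtot L := by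
  rw [List.take_of_length_le h]

@[simp] lemma dtot_take_replicate_D (k i : ℕ) : dtot ((List.replicate k D).take i) = 0 := by
  rw [List.take_replicate]; simp

lemma dtot_take_singleton (x : Step) (i : ℕ) :
    dtot ([x].take i) = if i = 0 then 0 else dtot [x] := by
  cases i with
  | zero => simp
  | succ n => simp [List.take_succ_cons]

end Infra
section Spec
open List

lemma mem_words_iff {l : ℕ} {w : List Step} : w ∈ Words l ↔ w.length = l := by
  constructor
  · intro h
    simp only [Words, Finset.mem_image] at h
    obtain ⟨f, _, rfl⟩ := h
    simp
  · rintro rfl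
    simp only [Words, Finset.mem_image]
    exact ⟨fun i => w.get i, Finset.mem_univ _, List.ofFn_get w⟩

lemma bad_iff {w : List Step} : bad w = true ↔ ∃ k ≤ w.length, 0 < depth w k := by
  simp only [bad, List.any_eq_true, List.mem_range, Nat.lt_succ_iff, decide_eq_true_eq]
  constructor
  · rintro ⟨k, hk, h⟩
    exact ⟨k, hk, by simp only [depth]; omega⟩
  · rintro ⟨k, hk, h⟩
    refine ⟨k, hk, ?_⟩
    simp only [depth] at h; omega

lemma isMaxDepth_iff {w : List Step} {k : ℕ} :
    isMaxDepth w k = true ↔ ∀ i ≤ w.length, depth w i ≤ depth w k := by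
  simp [isMaxDepth, List.all_eq_true, List.mem_range, Nat.lt_succ_iff]

lemma exists_isMaxDepth (w : List Step) : ∃ k ≤ w.length, isMaxDepth w k = true := by
  obtain ⟨k, hk, h⟩ := Finset.exists_max_image (Finset.range (w.length + 1)) (depth w)
    ⟨0, Finset.mem_range.2 (Nat.succ_pos _)⟩
  refine ⟨k, Nat.lt_succ_iff.1 (Finset.mem_range.1 hk), isMaxDepth_iff.2 ?_⟩
  intro i hi
  exact h i (Finset.mem_range.2 (Nat.lt_succ_of_le hi))

lemma reverse_range_getElem (n i : ℕ) (h : i < n + 1) :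
    (List.range (n + 1)).reverse[i]'(by simp; omega) = n - i := by
  rw [List.getElem_reverse, List.getElem_range]
  simp

lemma firstDeep_le (w : List Step) : firstDeep w ≤ w.length := by
  obtain ⟨k, hk, h⟩ := exists_isMaxDepth w
  have : firstDeep w < (List.range (w.length + 1)).length :=
    List.findIdx_lt_length_of_exists ⟨k, by simp [Nat.lt_succ_iff, hk], h⟩
  simpa [Nat.lt_succ_iff] using this

lemma firstDeep_max (w : List Step) : ∀ i ≤ w.length, depth w i ≤ depth w (firstDeep w) := by
  have hlt : firstDeep w < (List.range (w.length + 1)).length := by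
    simpa [Nat.lt_succ_iff] using firstDeep_le w
  have := List.findIdx_getElem (p := isMaxDepth w) (xs := List.range (w.length + 1)) (w := (show (List.range (w.length + 1)).findIdx (isMaxDepth w) < _ from hlt))
  rw [List.getElem_range] at this
  exact isMaxDepth_iff.1 this

lemma firstDeep_lt (w : List Step) : ∀ j < firstDeep w, depth w j < depth w (firstDeep w) := by
  intro j hj
  have hj' : j < (List.range (w.length + 1)).findIdx (isMaxDepth w) := hj
  have hfalse := List.not_of_lt_findIdx hj'
  rw [List.getElem_range] at hfalse
  by_contra hcon
  push_neg at hcon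
  have htrue : isMaxDepth w j = true := isMaxDepth_iff.2 fun i hi =>
    le_trans (firstDeep_max w i hi) hcon
  rw [htrue] at hfalse
  cases hfalse

lemma firstDeep_eq_of {w : List Step} {k : ℕ} (hk : k ≤ w.length)
    (hmax : ∀ i ≤ w.length, depth w i ≤ depth w k)
    (hfirst : ∀ j < k, depth w j < depth w k) : firstDeep w = k := by
  have hk' : k < (List.range (w.length + 1)).length := by simp [Nat.lt_succ_iff, hk]
  apply (List.findIdx_eq hk').2
  constructor
  · rw [List.getElem_range]
    exact isMaxDepth_iff.2 hmax
  · intro j hj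
    rw [List.getElem_range]
    refine Bool.eq_false_iff.2 fun hmem => ?_
    have h1 := isMaxDepth_iff.1 hmem k hk
    have h2 := hfirst j hj
    omega

lemma lastDeep_eq_of {w : List Step} {k : ℕ} (hk : k ≤ w.length)
    (hmax : ∀ i ≤ w.length, depth w i ≤ depth w k)
    (hlast : ∀ j ≤ w.length, k < j → depth w j < depth w k) : lastDeep w = k := by
  have hidx : w.length - k < (List.range (w.length + 1)).reverse.length := by simp
  have : (List.range (w.length + 1)).reverse.findIdx (isMaxDepth w) = w.length - k := by
    apply (List.findIdx_eq hidx).2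
    constructor
    · rw [reverse_range_getElem _ _ (by omega)]
      have h2 : w.length - (w.length - k) = k := by omega
      rw [h2]
      exact isMaxDepth_iff.2 hmax
    · intro j hj
      rw [reverse_range_getElem _ _ (by omega)]
      refine Bool.eq_false_iff.2 fun hmem => ?_
      have h1 := isMaxDepth_iff.1 hmem k hk
      have h2 := hlast (w.length - j) (by omega) (by omega)
      omega
  unfold lastDeep
  rw [this]
  omega

lemma lastDeep_le (w : List Step) : lastDeep w ≤ w.length := by
  unfold lastDeep; omega

lemma lastDeep_max (w : List Step) : ∀ i ≤ w.length, depth w i ≤ depth w (lastDeep w) := by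
  intro i hi
  obtain ⟨k, hk, h⟩ := exists_isMaxDepth w
  have hex : ∃ x ∈ (List.range (w.length + 1)).reverse, isMaxDepth w x = true :=
    ⟨k, by simp [List.mem_reverse, List.mem_range, Nat.lt_succ_iff]; omega, h⟩
  have hlt := List.findIdx_lt_length_of_exists hex
  have hmem := List.findIdx_getElem (w := hlt)
  rw [reverse_range_getElem _ _ (by simpa using hlt)] at hmem
  unfold lastDeep
  exact isMaxDepth_iff.1 hmem i hi

lemma lastDeep_last (w : List Step) :
    ∀ j ≤ w.length, lastDeep w < j → depth w j < depth w (lastDeep w) := by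
  intro j hj hgt
  have hval : lastDeep w =
      w.length - (List.range (w.length + 1)).reverse.findIdx (isMaxDepth w) := rfl
  rw [hval] at hgt
  have hjlt : w.length - j < (List.range (w.length + 1)).reverse.findIdx (isMaxDepth w) := by
    omega
  have hfalse := List.not_of_lt_findIdx hjlt
  rw [reverse_range_getElem _ _ (by omega)] at hfalse
  have hjj : w.length - (w.length - j) = j := by omega
  rw [hjj] at hfalse
  by_contra hcon
  push_neg at hcon
  have htrue : isMaxDepth w j = true := isMaxDepth_iff.2 fun i hi =>
    le_trans (lastDeep_max w i hi) hcon
  rw [htrue] at hfalse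
  cases hfalse

end Spec
section Runs
open List

/-- Notation for the window pieces. -/
def winN (r s : ℕ) : List Step := List.replicate r D ++ [N] ++ List.replicate s D
def winE (r s : ℕ) : List Step := List.replicate r D ++ [E] ++ List.replicate s D

@[simp] lemma winN_length (r s : ℕ) : (winN r s).length = r + s + 1 := by
  simp [winN]; omega
@[simp] lemma winE_length (r s : ℕ) : (winE r s).length = r + s + 1 := by
  simp [winE]; omega

lemma headD_ne_D (B : List Step) (hB : B = [] ∨ ∃ B₀, B = E :: B₀) :
    ∀ x B₀, B = x :: B₀ → x ≠ D := by
  rintro x B₀ rfl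
  rcases hB with h | ⟨B₁, h⟩
  · cases h
  · cases h; intro hc; cases hc

lemma takeWhile_D_length (s : ℕ) (B : List Step) (hB : ∀ x B₀, B = x :: B₀ → x ≠ D) :
    ((List.replicate s D ++ B).takeWhile (· == D)).length = s := by
  induction s with
  | zero =>
    simp only [List.replicate_zero, List.nil_append]
    cases B with
    | nil => simp
    | cons x B₀ =>
      have := hB x B₀ rfl
      rw [List.takeWhile_cons_of_neg (by simpa using this)]
      simp
  | succ k ih =>
    rw [List.replicate_succ, List.cons_append, List.takeWhile_cons_of_pos (by rfl)]
    rw [List.length_cons, ih]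

lemma dtot_take_winN (r s j : ℕ) :
    dtot ((winN r s).take j) = if j ≤ r then 0 else 1 := by
  unfold winN
  rw [List.append_assoc, dtot_take_append, dtot_take_append, dtot_take_replicate_D,
    dtot_take_singleton, List.length_replicate]
  simp only [dtot_take_replicate_D, dtot_singleton]
  split_ifs <;> omega

lemma dtot_take_winE (r s j : ℕ) :
    dtot ((winE r s).take j) = if j ≤ r then 0 else -1 := by
  unfold winE
  rw [List.append_assoc, dtot_take_append, dtot_take_append, dtot_take_replicate_D,
    dtot_take_singleton, List.length_replicate]
  simp only [dtot_take_replicate_D, dtot_singleton]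
  split_ifs <;> omega

@[simp] lemma dtot_winN (r s : ℕ) : dtot (winN r s) = 1 := by
  unfold winN; rw [dtot_append, dtot_append]; simp
@[simp] lemma dtot_winE (r s : ℕ) : dtot (winE r s) = -1 := by
  unfold winE; rw [dtot_append, dtot_append]; simp

/-- Depth of a three-part word. -/
lemma depth_comp (A C B : List Step) (i : ℕ) :
    depth (A ++ C ++ B) i
      = dtot (A.take i) + dtot (C.take (i - A.length)) + dtot (B.take (i - A.length - C.length)) := by
  rw [depth_eq_dtot, List.append_assoc, dtot_take_append, dtot_take_append]
  ring
end Runs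
section StructA
open List

lemma depth_succ {w : List Step} {i : ℕ} (h : i < w.length) :
    depth w (i + 1) = depth w i + dtot [w[i]] := by
  rw [depth_eq_dtot, depth_eq_dtot, List.take_succ, List.getElem?_eq_getElem h]
  simp only [Option.toList_some, dtot_append]

lemma takeWhile_D_eq_replicate (L : List Step) :
    L.takeWhile (· == D) = List.replicate (L.takeWhile (· == D)).length D := by
  rw [List.eq_replicate_iff]
  exact ⟨rfl, fun b hb => by simpa using List.mem_takeWhile_imp hb⟩

lemma dropWhile_D_head (L : List Step) :
    L.dropWhile (· == D) = [] ∨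
      ∃ x L₀, L.dropWhile (· == D) = x :: L₀ ∧ x ≠ D := by
  cases hL : L.dropWhile (· == D) with
  | nil => exact Or.inl rfl
  | cons x L₀ =>
    refine Or.inr ⟨x, L₀, rfl, ?_⟩
    have h2 := List.head?_dropWhile_not (· == D) L
    rw [hL] at h2
    simp only [List.head?_cons] at h2
    simpa using h2

/-- Structure lemma for bad Delannoy paths. -/
lemma lemA {n l : ℕ} {w : List Step} (hw : w ∈ BDelSet n l) :
    ∃ A B r s, w = A ++ winN r s ++ B ∧
      firstDeep w = A.length + r + 1 ∧ runR w = r ∧ runS w = s ∧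
      (A = [] ∨ ∃ A₀, A = A₀ ++ [N]) ∧ (B = [] ∨ ∃ B₀, B = E :: B₀) ∧
      0 ≤ dtot A ∧ (∀ i, dtot (A.take i) ≤ dtot A) ∧ (∀ i, dtot (B.take i) ≤ 0) := by
  have hbad : bad w = true := (Finset.mem_filter.1 hw).2
  set K := firstDeep w with hK
  have hKle : K ≤ w.length := firstDeep_le w
  have hmax := firstDeep_max w
  have hfirst := firstDeep_lt w
  set M := depth w K with hM
  -- extend hmax to all i
  have hmax' : ∀ i, depth w i ≤ M := by
    intro i
    rcases le_or_gt i w.length with h | h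
    · exact hmax i h
    · rw [depth_eq_dtot, List.take_of_length_le (le_of_lt h)]
      have := hmax w.length le_rfl
      rwa [depth_eq_dtot, List.take_length] at this
  have hM1 : 1 ≤ M := by
    obtain ⟨k, hk, hpos⟩ := bad_iff.1 hbad
    have := hmax k hk
    omega
  have hd0 : depth w 0 = 0 := by simp [depth_eq_dtot]
  have hK1 : 1 ≤ K := by
    by_contra hcon
    have : K = 0 := by omega
    rw [this] at hM
    omega
  -- the letter at K-1 is N
  have hKlt : K - 1 < w.length := by omega
  have hstep : depth w K = depth w (K - 1) + dtot [w[K - 1]] := by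
    have := depth_succ hKlt
    rwa [show K - 1 + 1 = K by omega] at this
  have hfirstK : depth w (K - 1) < M := hfirst (K - 1) (by omega)
  have hletter : w[K - 1] = N := by
    cases hx : w[K - 1] <;> rw [hx] at hstep <;> simp at hstep <;> omega
  -- decompose after position K
  set s := runS w with hs
  set T := w.drop K with hT
  have hTdec : T = List.replicate s D ++ T.dropWhile (· == D) := by
    conv_lhs => rw [← List.takeWhile_append_dropWhile (p := (· == D)) (l := T)]
    congr 1
    exact takeWhile_D_eq_replicate T
  set B := T.dropWhile (· == D) with hB
  -- decompose before position K
  set P := w.take (K - 1) with hP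
  have hPlen : P.length = K - 1 := by
    rw [hP, List.length_take]; omega
  set r := runR w with hr
  have hPreDec : P.reverse = List.replicate r D ++ P.reverse.dropWhile (· == D) := by
    conv_lhs => rw [← List.takeWhile_append_dropWhile (p := (· == D)) (l := P.reverse)]
    congr 1
    exact takeWhile_D_eq_replicate P.reverse
  set C := P.reverse.dropWhile (· == D) with hC
  set A := C.reverse with hA
  have hPdec : P = A ++ List.replicate r D := by
    have := congrArg List.reverse hPreDec
    rwa [List.reverse_reverse, List.reverse_append, List.reverse_replicate] at this
  have hAlen : A.length + r = K - 1 := by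
    have := congrArg List.length hPdec
    simp at this
    omega
  -- the full decomposition
  have htakeK : w.take K = P ++ [N] := by
    have h0 : w.take K = w.take (K - 1) ++ [w[K - 1]] := by
      conv_lhs => rw [show K = (K - 1) + 1 by omega]
      rw [List.take_succ, List.getElem?_eq_getElem hKlt]
      simp
    rw [h0, hletter, hP]
  have hwdec : w = A ++ winN r s ++ B := by
    conv_lhs => rw [← List.take_append_drop K w, htakeK, ← hT, hTdec, hPdec]
    unfold winN
    simp [List.append_assoc]
  -- length bookkeeping
  have hwlen : w.length = A.length + (r + s + 1) + B.length := by
    have := congrArg List.length hwdec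
    simp at this
    omega
  -- depth formula
  have hdepth : ∀ i, depth w i = dtot (A.take i) + (if i - A.length ≤ r then 0 else 1)
      + dtot (B.take (i - A.length - (r + s + 1))) := by
    intro i
    conv_lhs => rw [hwdec]
    rw [depth_comp, dtot_take_winN, winN_length]
  have hKval : K = A.length + r + 1 := by omega
  -- M = dtot A + 1
  have hMA : M = dtot A + 1 := by
    have h0 := hdepth K
    rw [hKval] at h0
    rw [show A.length + r + 1 - A.length = r + 1 by omega] at h0
    rw [if_neg (by omega : ¬(r + 1 ≤ r))] at h0
    rw [show r + 1 - (r + s + 1) = 0 by omega] at h0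
    rw [List.take_of_length_le (by omega : A.length ≤ A.length + r + 1)] at h0
    simp at h0
    rw [hKval] at hM
    omega
  -- prefix bound for A
  have hAbound : ∀ i, dtot (A.take i) ≤ dtot A := by
    intro i
    rcases le_or_gt A.length i with h | h
    · rw [List.take_of_length_le h]
    · have := hdepth i
      have h1 : i - A.length = 0 := by omega
      rw [h1] at this
      simp at this
      have h2 := hfirst i (by omega)
      omega
  -- suffix bound for B
  have hBbound : ∀ i, dtot (B.take i) ≤ 0 := by
    intro i
    have h1 := hdepth (A.length + (r + s + 1) + i)
    rw [show A.length + (r + s + 1) + i - A.length = r + s + 1 + i by omega] at h1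
    rw [show r + s + 1 + i - (r + s + 1) = i by omega] at h1
    rw [if_neg (by omega : ¬(r + s + 1 + i ≤ r))] at h1
    rw [List.take_of_length_le (by omega : A.length ≤ A.length + (r + s + 1) + i)] at h1
    have h4 := hmax' (A.length + (r + s + 1) + i)
    omega
  -- boundary of B
  have hBhead : B = [] ∨ ∃ B₀, B = E :: B₀ := by
    rcases dropWhile_D_head T with h | ⟨x, B₀, hx, hxD⟩
    · exact Or.inl (hB ▸ h)
    · right
      refine ⟨B₀, ?_⟩
      rw [hB, hx]
      congr 1
      -- x ≠ N via depth
      cases hxx : x with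
      | D => exact absurd hxx hxD
      | E => rfl
      | N =>
        exfalso
        have hBlen : 1 ≤ B.length := by rw [hB, hx]; simp
        have h1 := hdepth (A.length + (r + s + 1) + 1)
        rw [show A.length + (r + s + 1) + 1 - A.length = r + s + 2 by omega] at h1
        rw [show r + s + 2 - (r + s + 1) = 1 by omega] at h1
        rw [if_neg (by omega : ¬(r + s + 2 ≤ r))] at h1
        rw [List.take_of_length_le (by omega : A.length ≤ _)] at h1
        have hBtake : B.take 1 = [N] := by rw [hB, hx, hxx]; simp
        rw [hBtake] at h1
        have h4 := hmax' (A.length + (r + s + 1) + 1)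
        simp at h1
        omega
  -- boundary of A
  have hAlast : A = [] ∨ ∃ A₀, A = A₀ ++ [N] := by
    rcases dropWhile_D_head P.reverse with h | ⟨x, C₀, hx, hxD⟩
    · left
      rw [hA, hC, h]
      rfl
    · right
      refine ⟨C₀.reverse, ?_⟩
      rw [hA, hC, hx, List.reverse_cons]
      congr 1
      cases hxx : x with
      | D => exact absurd hxx hxD
      | N => rfl
      | E =>
        exfalso
        have hClen : A.length = C₀.length + 1 := by rw [hA, hC, hx]; simp
        have hAeq : A = C₀.reverse ++ [x] := by rw [hA, hC, hx, List.reverse_cons]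
        have h1 := hdepth (A.length - 1)
        rw [show A.length - 1 - A.length = 0 by omega] at h1
        rw [if_pos (Nat.zero_le r)] at h1
        have hAtake : A.take (A.length - 1) = C₀.reverse := by
          rw [hAeq]
          exact List.take_left' (by simp)
        rw [hAtake] at h1
        have hdtotA : dtot A = dtot C₀.reverse + dtot [x] := by rw [hAeq]; simp
        rw [hxx] at hdtotA
        simp at hdtotA h1
        have h4 := hfirst (A.length - 1) (by omega)
        omega
  exact ⟨A, B, r, s, hwdec, by omega, rfl, rfl, hAlast, hBhead, by omega, hAbound, hBbound⟩

end StructA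
section StructB
open List

/-- Inverse window map. -/
def invWin (v : List Step) : List Step :=
  let j := lastDeep v
  let r := ((v.take j).reverse.takeWhile (· == D)).length
  let s := ((v.drop (j + 1)).takeWhile (· == D)).length
  v.take (j - r) ++ (if 1 ≤ s then List.replicate (r + 1) D ++ [N] ++ List.replicate (s - 1) D
    else N :: List.replicate r D) ++ v.drop (j + s + 1)

lemma mem_DelSet_iff {m n' l : ℕ} {v : List Step} :
    v ∈ DelSet m n' l ↔ v.length = l ∧ v.count E + v.count D = m ∧ v.count N + v.count D = n' := by
  simp [DelSet, Finset.mem_filter, mem_words_iff, and_assoc]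

/-- Structure lemma for paths in Del(n+1, n-1, l). -/
lemma lemB {n l : ℕ} (hn : 1 ≤ n) {v : List Step} (hv : v ∈ DelSet (n + 1) (n - 1) l) :
    ∃ A B r s, v = A ++ winE r s ++ B ∧
      lastDeep v = A.length + r ∧
      ((v.take (lastDeep v)).reverse.takeWhile (· == D)).length = r ∧
      ((v.drop (lastDeep v + 1)).takeWhile (· == D)).length = s ∧
      (A = [] ∨ ∃ A₀, A = A₀ ++ [N]) ∧ (B = [] ∨ ∃ B₀, B = E :: B₀) ∧
      0 ≤ dtot A ∧ (∀ i, dtot (A.take i) ≤ dtot A) ∧ (∀ i, dtot (B.take i) ≤ 0) := by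
  obtain ⟨hvlen, hcE, hcN⟩ := mem_DelSet_iff.1 hv
  have hdtotv : dtot v = -2 := by
    unfold dtot
    have : v.count E = v.count N + 2 := by omega
    omega
  set J := lastDeep v with hJ
  have hJle : J ≤ v.length := lastDeep_le v
  have hmax := lastDeep_max v
  have hlast := lastDeep_last v
  set M := depth v J with hM
  have hmax' : ∀ i, depth v i ≤ M := by
    intro i
    rcases le_or_gt i v.length with h | h
    · exact hmax i h
    · rw [depth_eq_dtot, List.take_of_length_le (le_of_lt h)]
      have := hmax v.length le_rfl
      rwa [depth_eq_dtot, List.take_length] at this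
  have hM0 : 0 ≤ M := by
    have := hmax 0 (Nat.zero_le _)
    rw [depth_eq_dtot] at this
    simpa using this
  have hJlt : J < v.length := by
    rcases lt_or_eq_of_le hJle with h | h
    · exact h
    · exfalso
      rw [hM, hJ] at hM0
      rw [← hJ, h, depth_eq_dtot, List.take_length, hdtotv] at hM0
      omega
  -- the letter at J is E
  have hstep : depth v (J + 1) = depth v J + dtot [v[J]] := depth_succ hJlt
  have hlastJ : depth v (J + 1) < M := hlast (J + 1) (by omega) (by omega)
  have hletter : v[J] = E := by
    cases hx : v[J] <;> rw [hx] at hstep <;> simp at hstep <;> omega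
  -- decompose after position J+1
  set T := v.drop (J + 1) with hT
  set s := (T.takeWhile (· == D)).length with hs
  have hTdec : T = List.replicate s D ++ T.dropWhile (· == D) := by
    conv_lhs => rw [← List.takeWhile_append_dropWhile (p := (· == D)) (l := T)]
    congr 1
    exact takeWhile_D_eq_replicate T
  set B := T.dropWhile (· == D) with hB
  -- decompose before position J
  set P := v.take J with hP
  have hPlen : P.length = J := by rw [hP, List.length_take]; omega
  set r := (P.reverse.takeWhile (· == D)).length with hr
  have hPreDec : P.reverse = List.replicate r D ++ P.reverse.dropWhile (· == D) := by
    conv_lhs => rw [← List.takeWhile_append_dropWhile (p := (· == D)) (l := P.reverse)]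
    congr 1
    exact takeWhile_D_eq_replicate P.reverse
  set C := P.reverse.dropWhile (· == D) with hC
  set A := C.reverse with hA
  have hPdec : P = A ++ List.replicate r D := by
    have := congrArg List.reverse hPreDec
    rwa [List.reverse_reverse, List.reverse_append, List.reverse_replicate] at this
  have hAlen : A.length + r = J := by
    have := congrArg List.length hPdec
    simp at this
    omega
  have htakeJ : v.take (J + 1) = P ++ [E] := by
    have h0 : v.take (J + 1) = v.take J ++ [v[J]] := by
      rw [List.take_succ, List.getElem?_eq_getElem hJlt]
      simp
    rw [h0, hletter, hP]
  have hwdec : v = A ++ winE r s ++ B := by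
    conv_lhs => rw [← List.take_append_drop (J + 1) v, htakeJ, ← hT, hTdec, hPdec]
    unfold winE
    simp [List.append_assoc]
  have hwlen : v.length = A.length + (r + s + 1) + B.length := by
    have := congrArg List.length hwdec
    simp at this
    omega
  have hdepth : ∀ i, depth v i = dtot (A.take i) + (if i - A.length ≤ r then 0 else -1)
      + dtot (B.take (i - A.length - (r + s + 1))) := by
    intro i
    conv_lhs => rw [hwdec]
    rw [depth_comp, dtot_take_winE, winE_length]
  have hJval : J = A.length + r := by omega
  have hMA : M = dtot A := by
    have h0 := hdepth J
    rw [hJval] at h0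
    rw [show A.length + r - A.length = r by omega] at h0
    rw [if_pos (le_refl r)] at h0
    rw [show r - (r + s + 1) = 0 by omega] at h0
    rw [List.take_of_length_le (by omega : A.length ≤ A.length + r)] at h0
    simp at h0
    rw [hJval] at hM
    omega
  have hAbound : ∀ i, dtot (A.take i) ≤ dtot A := by
    intro i
    rcases le_or_gt A.length i with h | h
    · rw [List.take_of_length_le h]
    · have h1 := hdepth i
      rw [show i - A.length = 0 by omega] at h1
      simp at h1
      have h2 := hmax' i
      omega
  have hBbound : ∀ i, dtot (B.take i) ≤ 0 := by
    have key : ∀ i ≤ B.length, dtot (B.take i) ≤ 0 := by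
      intro i hi
      have h1 := hdepth (A.length + (r + s + 1) + i)
      rw [show A.length + (r + s + 1) + i - A.length = r + s + 1 + i by omega] at h1
      rw [show r + s + 1 + i - (r + s + 1) = i by omega] at h1
      rw [if_neg (by omega : ¬(r + s + 1 + i ≤ r))] at h1
      rw [List.take_of_length_le (by omega : A.length ≤ A.length + (r + s + 1) + i)] at h1
      have h4 := hlast (A.length + (r + s + 1) + i) (by omega) (by omega)
      omega
    intro i
    rcases le_or_gt i B.length with h | h
    · exact key i h
    · rw [List.take_of_length_le (le_of_lt h)]
      have := key B.length le_rfl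
      rwa [List.take_length] at this
  have hBhead : B = [] ∨ ∃ B₀, B = E :: B₀ := by
    rcases dropWhile_D_head T with h | ⟨x, B₀, hx, hxD⟩
    · exact Or.inl (hB ▸ h)
    · right
      refine ⟨B₀, ?_⟩
      rw [hB, hx]
      congr 1
      cases hxx : x with
      | D => exact absurd hxx hxD
      | E => rfl
      | N =>
        exfalso
        have hBlen : 1 ≤ B.length := by rw [hB, hx]; simp
        have h1 := hdepth (A.length + (r + s + 1) + 1)
        rw [show A.length + (r + s + 1) + 1 - A.length = r + s + 2 by omega] at h1
        rw [show r + s + 2 - (r + s + 1) = 1 by omega] at h1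
        rw [if_neg (by omega : ¬(r + s + 2 ≤ r))] at h1
        rw [List.take_of_length_le (by omega : A.length ≤ _)] at h1
        have hBtake : B.take 1 = [N] := by rw [hB, hx, hxx]; simp
        rw [hBtake] at h1
        have h4 := hlast (A.length + (r + s + 1) + 1) (by omega) (by omega)
        simp at h1
        omega
  have hAlast : A = [] ∨ ∃ A₀, A = A₀ ++ [N] := by
    rcases dropWhile_D_head P.reverse with h | ⟨x, C₀, hx, hxD⟩
    · left
      rw [hA, hC, h]
      rfl
    · right
      refine ⟨C₀.reverse, ?_⟩
      rw [hA, hC, hx, List.reverse_cons]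
      congr 1
      cases hxx : x with
      | D => exact absurd hxx hxD
      | N => rfl
      | E =>
        exfalso
        have hClen : A.length = C₀.length + 1 := by rw [hA, hC, hx]; simp
        have hAeq : A = C₀.reverse ++ [x] := by rw [hA, hC, hx, List.reverse_cons]
        have h1 := hdepth (A.length - 1)
        rw [show A.length - 1 - A.length = 0 by omega] at h1
        rw [if_pos (Nat.zero_le r)] at h1
        have hAtake : A.take (A.length - 1) = C₀.reverse := by
          rw [hAeq]
          exact List.take_left' (by simp)
        rw [hAtake] at h1
        have hdtotA : dtot A = dtot C₀.reverse + dtot [x] := by rw [hAeq]; simp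
        rw [hxx] at hdtotA
        simp at hdtotA h1
        have h4 := hmax' (A.length - 1)
        omega
  exact ⟨A, B, r, s, hwdec, by omega, hr.symm, hs.symm, hAlast, hBhead, by omega, hAbound, hBbound⟩

end StructB
section Comp
open List

lemma reverse_head_ne_D (A : List Step) (hA : A = [] ∨ ∃ A₀, A = A₀ ++ [N]) :
    ∀ x L₀, A.reverse = x :: L₀ → x ≠ D := by
  rintro x L₀ hx
  rcases hA with rfl | ⟨A₀, rfl⟩
  · cases hx
  · rw [List.reverse_append] at hx
    simp at hx
    rcases hx with ⟨h1, _⟩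
    rw [← h1]
    intro hc
    cases hc

/-- Computation of firstDeep, runs and phiWin for a word in "N-window normal form". -/
lemma compN (A B : List Step) (r s : ℕ)
    (hA : A = [] ∨ ∃ A₀, A = A₀ ++ [N]) (hB : B = [] ∨ ∃ B₀, B = E :: B₀)
    (hAb : ∀ i, dtot (A.take i) ≤ dtot A) (hBb : ∀ i, dtot (B.take i) ≤ 0) :
    firstDeep (A ++ winN r s ++ B) = A.length + r + 1 ∧
    runR (A ++ winN r s ++ B) = r ∧ runS (A ++ winN r s ++ B) = s ∧
    depth (A ++ winN r s ++ B) (A.length + r + 1) = dtot A + 1 ∧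
    phiWin (A ++ winN r s ++ B)
      = A ++ (if 1 ≤ r then winE (r - 1) (s + 1) else winE s 0) ++ B := by
  set u := A ++ winN r s ++ B with hu
  have hulen : u.length = A.length + (r + s + 1) + B.length := by
    rw [hu]; simp; omega
  have hdepth : ∀ i, depth u i = dtot (A.take i) + (if i - A.length ≤ r then 0 else 1)
      + dtot (B.take (i - A.length - (r + s + 1))) := by
    intro i
    rw [hu, depth_comp, dtot_take_winN, winN_length]
  have hK : depth u (A.length + r + 1) = dtot A + 1 := by
    have h0 := hdepth (A.length + r + 1)
    rw [show A.length + r + 1 - A.length = r + 1 by omega] at h0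
    rw [if_neg (by omega : ¬(r + 1 ≤ r))] at h0
    rw [show r + 1 - (r + s + 1) = 0 by omega] at h0
    rw [List.take_of_length_le (by omega : A.length ≤ A.length + r + 1)] at h0
    simpa using h0
  have hfd : firstDeep u = A.length + r + 1 := by
    apply firstDeep_eq_of (by omega)
    · intro i _
      rw [hK, hdepth i]
      rcases le_or_gt (i - A.length) r with h | h
      · rw [if_pos h, show i - A.length - (r + s + 1) = 0 by omega]
        have := hAb i
        simp
        omega
      · rw [if_neg (by omega)]
        have h1 := hAb i
        have h2 := hBb (i - A.length - (r + s + 1))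
        omega
    · intro j hj
      rw [hK, hdepth j]
      rw [if_pos (by omega : j - A.length ≤ r), show j - A.length - (r + s + 1) = 0 by omega]
      have := hAb j
      simp
      omega
  have htake : u.take (A.length + r) = A ++ List.replicate r D := by
    rw [hu]
    have : A ++ winN r s ++ B = (A ++ List.replicate r D) ++ ([N] ++ List.replicate s D ++ B) := by
      unfold winN; simp [List.append_assoc]
    rw [this]
    exact List.take_left' (by simp)
  have hdrop : u.drop (A.length + r + 1) = List.replicate s D ++ B := by
    rw [hu]
    have : A ++ winN r s ++ B = (A ++ List.replicate r D ++ [N]) ++ (List.replicate s D ++ B) := by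
      unfold winN; simp [List.append_assoc]
    rw [this]
    refine List.drop_left' (by simp; omega)
  have hrunR : runR u = r := by
    unfold runR
    rw [hfd, show A.length + r + 1 - 1 = A.length + r by omega, htake,
      List.reverse_append, List.reverse_replicate]
    exact takeWhile_D_length r A.reverse (reverse_head_ne_D A hA)
  have hrunS : runS u = s := by
    unfold runS
    rw [hfd, hdrop]
    exact takeWhile_D_length s B (headD_ne_D B hB)
  refine ⟨hfd, hrunR, hrunS, hK, ?_⟩
  simp only [phiWin]
  rw [hfd, hrunR, hrunS]
  rw [show A.length + r + 1 - 1 = A.length + r by omega]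
  have htakeA : u.take (A.length + r - r) = A := by
    rw [show A.length + r - r = A.length by omega, hu, List.append_assoc]
    exact List.take_left' rfl
  have hdropB : u.drop (A.length + r + s + 1) = B := by
    rw [hu]
    have : A ++ winN r s ++ B = (A ++ winN r s) ++ B := by simp [List.append_assoc]
    rw [this]
    refine List.drop_left' (by simp; omega)
  rw [htakeA, hdropB]
  congr 1
  split_ifs with hr
  · unfold winE
    congr 2
  · unfold winE
    have : r = 0 := by omega
    simp

/-- Computation of lastDeep, runs and invWin for a word in "E-window normal form". -/
lemma compE (A B : List Step) (r s : ℕ)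
    (hA : A = [] ∨ ∃ A₀, A = A₀ ++ [N]) (hB : B = [] ∨ ∃ B₀, B = E :: B₀)
    (hAb : ∀ i, dtot (A.take i) ≤ dtot A) (hBb : ∀ i, dtot (B.take i) ≤ 0) :
    lastDeep (A ++ winE r s ++ B) = A.length + r ∧
    invWin (A ++ winE r s ++ B)
      = A ++ (if 1 ≤ s then winN (r + 1) (s - 1) else winN 0 r) ++ B := by
  set u := A ++ winE r s ++ B with hu
  have hulen : u.length = A.length + (r + s + 1) + B.length := by
    rw [hu]; simp; omega
  have hdepth : ∀ i, depth u i = dtot (A.take i) + (if i - A.length ≤ r then 0 else -1)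
      + dtot (B.take (i - A.length - (r + s + 1))) := by
    intro i
    rw [hu, depth_comp, dtot_take_winE, winE_length]
  have hJ : depth u (A.length + r) = dtot A := by
    have h0 := hdepth (A.length + r)
    rw [show A.length + r - A.length = r by omega] at h0
    rw [if_pos (le_refl r), show r - (r + s + 1) = 0 by omega] at h0
    rw [List.take_of_length_le (by omega : A.length ≤ A.length + r)] at h0
    simpa using h0
  have hld : lastDeep u = A.length + r := by
    apply lastDeep_eq_of (by omega)
    · intro i _
      rw [hJ, hdepth i]
      rcases le_or_gt (i - A.length) r with h | h
      · rw [if_pos h, show i - A.length - (r + s + 1) = 0 by omega]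
        have := hAb i
        simp
        omega
      · rw [if_neg (by omega)]
        have h1 := hAb i
        have h2 := hBb (i - A.length - (r + s + 1))
        omega
    · intro j _ hj
      rw [hJ, hdepth j]
      rw [if_neg (by omega : ¬(j - A.length ≤ r))]
      have h1 := hAb j
      have h2 := hBb (j - A.length - (r + s + 1))
      omega
  have htake : u.take (A.length + r) = A ++ List.replicate r D := by
    rw [hu]
    have : A ++ winE r s ++ B = (A ++ List.replicate r D) ++ ([E] ++ List.replicate s D ++ B) := by
      unfold winE; simp [List.append_assoc]
    rw [this]
    exact List.take_left' (by simp)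
  have hdrop : u.drop (A.length + r + 1) = List.replicate s D ++ B := by
    rw [hu]
    have : A ++ winE r s ++ B = (A ++ List.replicate r D ++ [E]) ++ (List.replicate s D ++ B) := by
      unfold winE; simp [List.append_assoc]
    rw [this]
    refine List.drop_left' (by simp; omega)
  have hrunR : ((u.take (lastDeep u)).reverse.takeWhile (· == D)).length = r := by
    rw [hld, htake, List.reverse_append, List.reverse_replicate]
    exact takeWhile_D_length r A.reverse (reverse_head_ne_D A hA)
  have hrunS : ((u.drop (lastDeep u + 1)).takeWhile (· == D)).length = s := by
    rw [hld, hdrop]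
    exact takeWhile_D_length s B (headD_ne_D B hB)
  refine ⟨hld, ?_⟩
  simp only [invWin]
  rw [hrunR, hrunS, hld]
  have htakeA : u.take (A.length + r - r) = A := by
    rw [show A.length + r - r = A.length by omega, hu, List.append_assoc]
    exact List.take_left' rfl
  have hdropB : u.drop (A.length + r + s + 1) = B := by
    rw [hu]
    have : A ++ winE r s ++ B = (A ++ winE r s) ++ B := by simp [List.append_assoc]
    rw [this]
    refine List.drop_left' (by simp; omega)
  rw [htakeA, hdropB]
  congr 1

end Comp
section Maj
open List

lemma getD_replicate_step (k i : ℕ) (x d : Step) :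
    (List.replicate k x).getD i d = if i < k then x else d := by
  rw [List.getD_eq_getElem?_getD, List.getElem?_replicate]
  split_ifs <;> simp

lemma getD_win (x : Step) (r s t : ℕ) :
    (List.replicate r D ++ [x] ++ List.replicate s D).getD t E =
      if t < r then D else if t = r then x else if t < r + s + 1 then D else E := by
  rcases lt_or_ge t r with h1 | h1
  · rw [List.append_assoc, List.getD_append _ _ _ _ (by simp; omega)]
    rw [getD_replicate_step, if_pos h1, if_pos h1]
  · rw [List.append_assoc, List.getD_append_right _ _ _ _ (by simpa using h1)]
    rw [List.singleton_append, List.length_replicate]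
    rcases eq_or_lt_of_le h1 with heq | h2
    · rw [← heq, Nat.sub_self]
      simp
    · rw [show t - r = (t - r - 1) + 1 by omega, List.getD_cons_succ, getD_replicate_step]
      rw [if_neg (by omega : ¬ t < r), if_neg (by omega : ¬ t = r)]
      split_ifs with h3 h4 <;> first | rfl | omega

lemma getD_winN' (r s t : ℕ) :
    (winN r s).getD t E = if t < r then D else if t = r then N else if t < r + s + 1 then D else E :=
  getD_win N r s t

lemma getD_winE' (r s t : ℕ) :
    (winE r s).getD t E = if t < r then D else if t = r then E else if t < r + s + 1 then D else E :=
  getD_win E r s t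

lemma getD_left (A W B : List Step) (j : ℕ) (h : j < A.length) :
    (A ++ W ++ B).getD j E = A.getD j E := by
  rw [List.append_assoc, List.getD_append _ _ _ _ h]

lemma getD_mid (A W B : List Step) (j : ℕ) (h1 : A.length ≤ j) (h2 : j < A.length + W.length) :
    (A ++ W ++ B).getD j E = W.getD (j - A.length) E := by
  rw [List.append_assoc, List.getD_append_right _ _ _ _ h1, List.getD_append _ _ _ _ (by omega)]

lemma getD_right (A W B : List Step) (j : ℕ) (h : A.length + W.length ≤ j) :
    (A ++ W ++ B).getD j E = B.getD (j - A.length - W.length) E := by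
  rw [List.append_assoc, List.getD_append_right _ _ _ _ (by omega)]
  rw [List.getD_append_right _ _ _ _ (by omega)]

lemma maj_congr (rank : Step → ℕ) (w v : List Step) (hlen : w.length = v.length)
    (h : ∀ j, j + 1 < w.length →
      ((rank (w.getD (j + 1) E) < rank (w.getD j E)) ↔
        (rank (v.getD (j + 1) E) < rank (v.getD j E)))) :
    maj rank w = maj rank v := by
  unfold maj
  rw [← hlen]
  apply Finset.sum_congr rfl
  intro j hj
  rw [Finset.mem_range] at hj
  have hiff := h j (by omega)
  split_ifs with h1 h2 h2
  · rfl
  · exact absurd (hiff.1 h1) h2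
  · exact absurd (hiff.2 h2) h1
  · rfl

lemma maj_win_core (rank : Step → ℕ)
    (hND : rank N < rank D) (hDE : rank D < rank E)
    (A B : List Step) (r s p q : ℕ) (hpq : p + q = r + s)
    (hA : A = [] ∨ ∃ A₀, A = A₀ ++ [N]) (hB : B = [] ∨ ∃ B₀, B = E :: B₀)
    (hdesc : ∀ t, t + 1 < r + s + 1 →
      ((rank ((winN r s).getD (t + 1) E) < rank ((winN r s).getD t E)) ↔
        (rank ((winE p q).getD (t + 1) E) < rank ((winE p q).getD t E)))) :
    maj rank (A ++ winN r s ++ B) = maj rank (A ++ winE p q ++ B) := by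
  have hminN : ∀ y, ¬ rank y < rank N := by intro y; cases y <;> omega
  have hmaxE : ∀ y, ¬ rank E < rank y := by intro y; cases y <;> omega
  have hXlen : (winN r s).length = r + s + 1 := winN_length r s
  have hYlen : (winE p q).length = r + s + 1 := by rw [winE_length]; omega
  apply maj_congr
  · simp [hXlen, hYlen]
  intro j hj
  rw [List.length_append, List.length_append, hXlen] at hj
  rcases lt_trichotomy (j + 1) A.length with hc1 | hc2 | hc3
  · rw [getD_left A (winN r s) B j (by omega), getD_left A (winN r s) B (j + 1) (by omega),
      getD_left A (winE p q) B j (by omega), getD_left A (winE p q) B (j + 1) (by omega)]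
  · have hAne : A ≠ [] := by
      intro h
      rw [h] at hc2
      simp at hc2
    obtain ⟨A₀, hA₀⟩ : ∃ A₀, A = A₀ ++ [N] := hA.resolve_left hAne
    have hlenA : A.length = A₀.length + 1 := by rw [hA₀]; simp
    have hAj : A.getD j E = N := by
      rw [hA₀, List.getD_append_right _ _ _ _ (by omega)]
      rw [show j - A₀.length = 0 by omega]
      rfl
    rw [getD_left A (winN r s) B j (by omega), getD_left A (winE p q) B j (by omega),
      getD_mid A (winN r s) B (j + 1) (by omega) (by rw [hXlen]; omega),
      getD_mid A (winE p q) B (j + 1) (by omega) (by rw [hYlen]; omega), hAj]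
    exact iff_of_false (hminN _) (hminN _)
  · rcases lt_or_ge (j + 1) (A.length + (r + s + 1)) with hc4 | hc5
    · rw [getD_mid A (winN r s) B j (by omega) (by rw [hXlen]; omega),
        getD_mid A (winN r s) B (j + 1) (by omega) (by rw [hXlen]; omega),
        getD_mid A (winE p q) B j (by omega) (by rw [hYlen]; omega),
        getD_mid A (winE p q) B (j + 1) (by omega) (by rw [hYlen]; omega),
        show j + 1 - A.length = (j - A.length) + 1 by omega]
      exact hdesc (j - A.length) (by omega)
    · rcases eq_or_lt_of_le hc5 with hc6 | hc7
      · have hBne : B ≠ [] := by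
          intro h
          rw [h] at hj
          simp at hj
          omega
        obtain ⟨B₀, hB₀⟩ : ∃ B₀, B = E :: B₀ := hB.resolve_left hBne
        have hBB : B.getD 0 E = E := by rw [hB₀]; rfl
        rw [getD_mid A (winN r s) B j (by omega) (by rw [hXlen]; omega),
          getD_mid A (winE p q) B j (by omega) (by rw [hYlen]; omega),
          getD_right A (winN r s) B (j + 1) (by rw [hXlen]; omega),
          getD_right A (winE p q) B (j + 1) (by rw [hYlen]; omega),
          hXlen, hYlen, show j + 1 - A.length - (r + s + 1) = 0 by omega, hBB]
        exact iff_of_false (hmaxE _) (hmaxE _)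
      · rw [getD_right A (winN r s) B j (by rw [hXlen]; omega),
          getD_right A (winN r s) B (j + 1) (by rw [hXlen]; omega),
          getD_right A (winE p q) B j (by rw [hYlen]; omega),
          getD_right A (winE p q) B (j + 1) (by rw [hYlen]; omega), hXlen, hYlen]

set_option maxHeartbeats 1000000 in
lemma maj_window (rank : Step → ℕ) (hND : rank N < rank D) (hDE : rank D < rank E)
    (A B : List Step) (r s : ℕ)
    (hA : A = [] ∨ ∃ A₀, A = A₀ ++ [N]) (hB : B = [] ∨ ∃ B₀, B = E :: B₀) :
    maj rank (A ++ winN r s ++ B)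
      = maj rank (A ++ (if 1 ≤ r then winE (r - 1) (s + 1) else winE s 0) ++ B) := by
  split_ifs with hr
  · apply maj_win_core rank hND hDE A B r s (r - 1) (s + 1) (by omega) hA hB
    intro t ht
    rw [getD_winN', getD_winN', getD_winE', getD_winE']
    split_ifs <;> omega
  · apply maj_win_core rank hND hDE A B r s s 0 (by omega) hA hB
    intro t ht
    rw [getD_winN', getD_winN', getD_winE', getD_winE']
    split_ifs <;> omega

end Maj
section Counts
open List

@[simp] lemma count_winN_E (r s : ℕ) : (winN r s).count E = 0 := by
  simp [winN, List.count_append, List.count_replicate]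
@[simp] lemma count_winN_N (r s : ℕ) : (winN r s).count N = 1 := by
  simp [winN, List.count_append, List.count_replicate]
@[simp] lemma count_winN_D (r s : ℕ) : (winN r s).count D = r + s := by
  simp [winN, List.count_append, List.count_replicate]
@[simp] lemma count_winE_E (r s : ℕ) : (winE r s).count E = 1 := by
  simp [winE, List.count_append, List.count_replicate]
@[simp] lemma count_winE_N (r s : ℕ) : (winE r s).count N = 0 := by
  simp [winE, List.count_append, List.count_replicate]
@[simp] lemma count_winE_D (r s : ℕ) : (winE r s).count D = r + s := by
  simp [winE, List.count_append, List.count_replicate]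

end Counts


/-- for the order N < D < E, the window map φ is a bijection from
bad paths in Del(n,n,l) onto Del(n+1,n-1,l), with maj(W) = maj(φ(W)). -/
theorem phiWin_NDE (n l : ℕ) (hn : 1 ≤ n)
    (rank : Step → ℕ) (hrank : Function.Injective rank)
    (hND : rank N < rank D) (hDE : rank D < rank E) :
    Set.BijOn phiWin (BDelSet n l : Set (List Step)) (DelSet (n + 1) (n - 1) l : Set (List Step)) ∧
      ∀ w ∈ BDelSet n l, maj rank w = maj rank (phiWin w) := by
  have hfwd : ∀ w ∈ BDelSet n l, phiWin w ∈ DelSet (n + 1) (n - 1) l ∧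
      invWin (phiWin w) = w ∧ maj rank w = maj rank (phiWin w) := by
    intro w hw
    obtain ⟨A, B, r, s, hdec, hfd, hrR, hrS, hA, hB, hd0, hAb, hBb⟩ := lemA hw
    obtain ⟨hfd', hrR', hrS', hdep', hphi⟩ := compN A B r s hA hB hAb hBb
    have hwDel : w ∈ DelSet n n l := (Finset.mem_filter.1 hw).1
    obtain ⟨hwlen, hwcE, hwcN⟩ := mem_DelSet_iff.1 hwDel
    rw [hdec] at hwlen hwcE hwcN
    simp [List.count_append] at hwcE hwcN
    simp at hwlen
    have hphiw : phiWin w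
        = A ++ (if 1 ≤ r then winE (r - 1) (s + 1) else winE s 0) ++ B := by
      rw [hdec, hphi]
    have hmaj : maj rank w = maj rank (phiWin w) := by
      rw [hphiw, hdec]
      exact maj_window rank hND hDE A B r s hA hB
    have hmem : phiWin w ∈ DelSet (n + 1) (n - 1) l := by
      rw [hphiw, mem_DelSet_iff]
      split_ifs with hr1
      · refine ⟨?_, ?_, ?_⟩ <;> simp [List.count_append] <;> omega
      · refine ⟨?_, ?_, ?_⟩ <;> simp [List.count_append] <;> omega
    refine ⟨hmem, ?_, hmaj⟩
    rw [hphiw]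
    split_ifs with hr1
    · obtain ⟨_, hinv⟩ := compE A B (r - 1) (s + 1) hA hB hAb hBb
      rw [hinv, if_pos (by omega : 1 ≤ s + 1)]
      rw [show r - 1 + 1 = r by omega, show s + 1 - 1 = s by omega, ← hdec]
    · obtain ⟨_, hinv⟩ := compE A B s 0 hA hB hAb hBb
      rw [hinv, if_neg (by omega : ¬ 1 ≤ (0:ℕ))]
      rw [show r = 0 by omega] at hdec
      rw [← hdec]
  have hbwd : ∀ v ∈ DelSet (n + 1) (n - 1) l,
      invWin v ∈ BDelSet n l ∧ phiWin (invWin v) = v := by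
    intro v hv
    obtain ⟨A, B, r, s, hdec, hld, hr', hs', hA, hB, hd0, hAb, hBb⟩ := lemB hn hv
    obtain ⟨hld', hinv⟩ := compE A B r s hA hB hAb hBb
    obtain ⟨hvlen, hvcE, hvcN⟩ := mem_DelSet_iff.1 hv
    rw [hdec] at hvlen hvcE hvcN
    simp [List.count_append] at hvcE hvcN
    simp at hvlen
    rcases le_or_gt 1 s with hs1 | hs1
    · have hinvv : invWin v = A ++ winN (r + 1) (s - 1) ++ B := by
        rw [hdec, hinv, if_pos hs1]
      obtain ⟨hfd2, _, _, hdep2, hphi2⟩ := compN A B (r + 1) (s - 1) hA hB hAb hBb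
      constructor
      · rw [hinvv, BDelSet, Finset.mem_filter]
        constructor
        · rw [mem_DelSet_iff]
          refine ⟨?_, ?_, ?_⟩ <;> simp [List.count_append] <;> omega
        · rw [bad_iff]
          refine ⟨A.length + (r + 1) + 1, by simp; omega, ?_⟩
          rw [hdep2]
          omega
      · rw [hinvv, hphi2, if_pos (by omega : 1 ≤ r + 1)]
        rw [show r + 1 - 1 = r by omega, show s - 1 + 1 = s by omega, ← hdec]
    · have hs0 : s = 0 := by omega
      have hinvv : invWin v = A ++ winN 0 r ++ B := by
        rw [hdec, hinv, if_neg (by omega)]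
      obtain ⟨hfd2, _, _, hdep2, hphi2⟩ := compN A B 0 r hA hB hAb hBb
      constructor
      · rw [hinvv, BDelSet, Finset.mem_filter]
        constructor
        · rw [mem_DelSet_iff]
          refine ⟨?_, ?_, ?_⟩ <;> simp [List.count_append] <;> omega
        · rw [bad_iff]
          refine ⟨A.length + 0 + 1, by simp; omega, ?_⟩
          rw [hdep2]
          omega
      · rw [hinvv, hphi2, if_neg (by omega : ¬ 1 ≤ (0:ℕ))]
        rw [hs0] at hdec
        rw [← hdec]
  refine ⟨⟨?_, ?_, ?_⟩, fun w hw => (hfwd w hw).2.2⟩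
  · intro w hw
    simp only [Finset.mem_coe] at hw ⊢
    exact (hfwd w hw).1
  · intro w1 h1 w2 h2 heq
    simp only [Finset.mem_coe] at h1 h2
    have e1 := (hfwd w1 h1).2.1
    have e2 := (hfwd w2 h2).2.1
    rw [← e1, ← e2, heq]
  · intro v hv
    simp only [Finset.mem_coe] at hv
    exact ⟨invWin v, by simpa using (hbwd v hv).1, (hbwd v hv).2⟩
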